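/- arXiv:2008.02856 — 2 statements merged into one kernel-verified Lean document; each statement's English description precedes it below -/
import Mathlib

section
/- Suppose AᵀA ≠ 0, β > 0, 0 < α < 2/(λ₁ + β), and the step-size is chosen as δ = 2/(λ₁/(λ₁+β) + λ_r/(λ_r+β)) (this δ satisfies 0 < δ < 2(λ₁+β)/λ₁). Then there exists a real number ρ with ϱ ≤ ρ < 1 such that for every iteration t ≥ 0, ‖g(t+1)‖ ≤ (μ* + δ λ₁ ‖K(0) − K_β‖_F · ρ^{t+1}) · ‖g(t)‖. -/
open Matrix Finset

/-- Euclidean norm of a vector in `ℝ^d`. -/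
noncomputable def euclNorm {d : ℕ} (v : Fin d → ℝ) : ℝ :=
  Real.sqrt (∑ i, v i ^ 2)

/-- Frobenius norm of a matrix. -/
noncomputable def frob {n d : ℕ} (M : Matrix (Fin n) (Fin d) ℝ) : ℝ :=
  Real.sqrt (∑ i, ∑ j, M i j ^ 2)

lemma enorm_nonneg' {d : ℕ} (v : Fin d → ℝ) : 0 ≤ euclNorm v := Real.sqrt_nonneg _

lemma sq_enorm {d : ℕ} (v : Fin d → ℝ) : euclNorm v ^ 2 = ∑ i, v i ^ 2 := by
  rw [euclNorm, Real.sq_sqrt]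
  positivity

lemma enorm_le_of_sq {d : ℕ} {v : Fin d → ℝ} {c : ℝ} (hc : 0 ≤ c)
    (h : ∑ i, v i ^ 2 ≤ c ^ 2) : euclNorm v ≤ c := by
  rw [euclNorm]
  calc Real.sqrt (∑ i, v i ^ 2) ≤ Real.sqrt (c ^ 2) := Real.sqrt_le_sqrt h
  _ = c := Real.sqrt_sq hc

lemma enorm_triangle {d : ℕ} (u v : Fin d → ℝ) : euclNorm (u + v) ≤ euclNorm u + euclNorm v := by
  have h : ∀ w : Fin d → ℝ, euclNorm w = ‖(WithLp.equiv 2 (Fin d → ℝ)).symm w‖ := by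
    intro w
    rw [EuclideanSpace.norm_eq, euclNorm]
    congr 1
    apply Finset.sum_congr rfl
    intro i _
    rw [Real.norm_eq_abs, sq_abs]
    rfl
  rw [h, h, h]
  exact norm_add_le _ _

lemma enorm_diag_le {d : ℕ} (w v : Fin d → ℝ) (m : ℝ) (hm : 0 ≤ m)
    (h : ∀ j, (w j * v j) ^ 2 ≤ m ^ 2 * v j ^ 2) :
    euclNorm ((Matrix.diagonal w).mulVec v) ≤ m * euclNorm v := by
  apply enorm_le_of_sq (mul_nonneg hm (enorm_nonneg' v))
  calc ∑ i, ((Matrix.diagonal w).mulVec v i) ^ 2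
      = ∑ i, (w i * v i) ^ 2 := by
        apply Finset.sum_congr rfl; intro i _; rw [Matrix.mulVec_diagonal]
    _ ≤ ∑ i, m ^ 2 * v i ^ 2 := Finset.sum_le_sum fun i _ => h i
    _ = m ^ 2 * ∑ i, v i ^ 2 := by rw [Finset.mul_sum]
    _ = (m * euclNorm v) ^ 2 := by rw [mul_pow, sq_enorm]

lemma enorm_mulVec_le {d : ℕ} (M : Matrix (Fin d) (Fin d) ℝ) (v : Fin d → ℝ) :
    euclNorm (M.mulVec v) ≤ frob M * euclNorm v := by
  have hf : 0 ≤ frob M := Real.sqrt_nonneg _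
  apply enorm_le_of_sq (mul_nonneg hf (enorm_nonneg' v))
  have hfs : frob M ^ 2 = ∑ i, ∑ j, M i j ^ 2 := by
    rw [frob, Real.sq_sqrt]; positivity
  calc ∑ i, (M.mulVec v i) ^ 2
      = ∑ i, (∑ j, M i j * v j) ^ 2 := rfl
    _ ≤ ∑ i, (∑ j, M i j ^ 2) * ∑ j, v j ^ 2 := by
        apply Finset.sum_le_sum
        intro i _
        exact Finset.sum_mul_sq_le_sq_mul_sq _ _ _
    _ = (frob M * euclNorm v) ^ 2 := by
        rw [← Finset.sum_mul, mul_pow, hfs, sq_enorm]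

lemma enorm_orth {d : ℕ} (V : Matrix (Fin d) (Fin d) ℝ) (hV : V * Vᵀ = 1)
    (v : Fin d → ℝ) : euclNorm (Vᵀ.mulVec v) = euclNorm v := by
  have key : ∑ i, (Vᵀ.mulVec v i) ^ 2 = ∑ i, v i ^ 2 := by
    have h1 : (Vᵀ.mulVec v) ⬝ᵥ (Vᵀ.mulVec v) = v ⬝ᵥ v := by
      rw [Matrix.dotProduct_mulVec, Matrix.vecMul_transpose,
        Matrix.mulVec_mulVec, hV, Matrix.one_mulVec]
    simpa [dotProduct, sq] using h1
  rw [euclNorm, euclNorm, key]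

lemma frob_conj {d : ℕ} (V E : Matrix (Fin d) (Fin d) ℝ) (hV : Vᵀ * V = 1)
    (hV2 : V * Vᵀ = 1) : frob (Vᵀ * E * V) = frob E := by
  have ht : ∀ M : Matrix (Fin d) (Fin d) ℝ, ∑ i, ∑ j, M i j ^ 2 = (Mᵀ * M).trace := by
    intro M
    rw [Matrix.trace]
    rw [Finset.sum_comm]
    apply Finset.sum_congr rfl
    intro j _
    simp [Matrix.mul_apply, Matrix.diag, Matrix.transpose_apply, sq]
  rw [frob, frob, ht, ht]
  congr 1
  have step1 : (Vᵀ * E * V)ᵀ * (Vᵀ * E * V) = Vᵀ * (Eᵀ * (V * Vᵀ) * E) * V := by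
    simp only [Matrix.transpose_mul, Matrix.transpose_transpose]
    noncomm_ring
  rw [step1, hV2, Matrix.mul_one, Matrix.trace_mul_cycle, hV2, Matrix.one_mul]
lemma enorm_smul' {d : ℕ} (a : ℝ) (v : Fin d → ℝ) : euclNorm (a • v) = |a| * euclNorm v := by
  have : ∑ i, (a • v) i ^ 2 = a ^ 2 * ∑ i, v i ^ 2 := by
    rw [Finset.mul_sum]; apply Finset.sum_congr rfl; intro i _; simp [mul_pow]
  rw [euclNorm, euclNorm, this, Real.sqrt_mul (sq_nonneg a), Real.sqrt_sq_eq_abs]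

lemma ipg_conj_pow {d : ℕ} (V D : Matrix (Fin d) (Fin d) ℝ) (hV : Vᵀ * V = 1)
    (hV2 : V * Vᵀ = 1) (k : ℕ) : (V * D * Vᵀ) ^ k = V * D ^ k * Vᵀ := by
  induction k with
  | zero => simp [hV2]
  | succ k ih =>
      rw [pow_succ, ih, pow_succ]
      calc V * D ^ k * Vᵀ * (V * D * Vᵀ) = V * D ^ k * (Vᵀ * V) * D * Vᵀ := by
            noncomm_ring
        _ = V * (D ^ k * D) * Vᵀ := by rw [hV]; noncomm_ring

set_option maxHeartbeats 2000000 in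
/-- Theorem 1(i) with optimal step-size: with
`δ = 2/(λ₁/(λ₁+β) + λ_r/(λ_r+β))`, the gradients of the IPG method satisfy
`‖g(t+1)‖ ≤ (μ* + δ λ₁ ‖K(0) − K_β‖_F ρ^{t+1}) ‖g(t)‖` with `ϱ ≤ ρ < 1`. -/
theorem ipg_gradient_contraction_optimal_stepsize
    (n d : ℕ) (hd : 0 < d)
    (A : Matrix (Fin n) (Fin d) ℝ) (B : Fin n → ℝ)
    (hAnz : Aᵀ * A ≠ 0)
    (lam : Fin d → ℝ) (V : Matrix (Fin d) (Fin d) ℝ)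
    (hV : Vᵀ * V = 1)
    (hdiag : Aᵀ * A = V * Matrix.diagonal lam * Vᵀ)
    (hanti : Antitone lam)
    (r : ℕ) (hr1 : 1 ≤ r) (hrd : r ≤ d)
    (hlamr : 0 < lam ⟨r - 1, by omega⟩)
    (hzero : ∀ j : Fin d, r ≤ (j : ℕ) → lam j = 0)
    (α β δ : ℝ) (hβ : 0 < β)
    (hα0 : 0 < α) (hα : α < 2 / (lam ⟨0, hd⟩ + β))
    (hδ : δ = 2 / (lam ⟨0, hd⟩ / (lam ⟨0, hd⟩ + β) +
        lam ⟨r - 1, by omega⟩ / (lam ⟨r - 1, by omega⟩ + β)))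
    (K : ℕ → Matrix (Fin d) (Fin d) ℝ)
    (hK : ∀ t, K (t + 1) = K t - α • ((Aᵀ * A + β • 1) * K t - 1))
    (x : ℕ → Fin d → ℝ) (g : ℕ → Fin d → ℝ)
    (hg : ∀ t, g t = Aᵀ.mulVec (A.mulVec (x t) - B))
    (hx : ∀ t, x (t + 1) = x t - δ • (K (t + 1)).mulVec (g t)) :
    ∃ ρ : ℝ,
      (lam ⟨0, hd⟩ - lam ⟨d - 1, by omega⟩) /
          (lam ⟨0, hd⟩ + lam ⟨d - 1, by omega⟩ + 2 * β) ≤ ρ ∧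
      ρ < 1 ∧
      ∀ t : ℕ,
        euclNorm (g (t + 1)) ≤
          ((lam ⟨0, hd⟩ - lam ⟨r - 1, by omega⟩) /
              (lam ⟨0, hd⟩ + lam ⟨r - 1, by omega⟩ +
                2 * (lam ⟨0, hd⟩ * lam ⟨r - 1, by omega⟩ / β)) +
            δ * lam ⟨0, hd⟩ * frob (K 0 - (Aᵀ * A + β • 1)⁻¹) * ρ ^ (t + 1)) *
            euclNorm (g t) := by
  have hV2 : V * Vᵀ = 1 := mul_eq_one_comm.mp hV
  have hrd' : r - 1 < d := by omega
  have hdd : d - 1 < d := by omega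
  set i0 : Fin d := ⟨0, hd⟩ with hi0def
  set ir : Fin d := ⟨r - 1, hrd'⟩ with hirdef
  set id' : Fin d := ⟨d - 1, hdd⟩ with hiddef
  have hlr : 0 < lam ir := hlamr
  -- eigenvalues are nonnegative and bounded by lam i0
  have lamnn : ∀ j : Fin d, 0 ≤ lam j := by
    intro j
    rcases le_or_gt r j.1 with h | h
    · rw [hzero j h]
    · exact le_of_lt (lt_of_lt_of_le hlr (hanti (show j ≤ ir by
        simp only [hirdef, Fin.le_def]; omega)))
  have lam_le : ∀ j : Fin d, lam j ≤ lam i0 := fun j =>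
    hanti (show i0 ≤ j by simp only [hi0def, Fin.le_def]; omega)
  have hl1 : 0 < lam i0 := lt_of_lt_of_le hlr (lam_le ir)
  have hlb : ∀ j : Fin d, (0:ℝ) < lam j + β := fun j => by
    have := lamnn j; linarith
  -- the matrix S and its inverse
  set S : Matrix (Fin d) (Fin d) ℝ := Aᵀ * A + β • 1 with hSdef
  have hdiagβ : Matrix.diagonal (fun j : Fin d => lam j + β)
      = Matrix.diagonal lam + β • 1 := by
    ext i j
    by_cases h : i = j <;>
      simp [Matrix.diagonal_apply, Matrix.one_apply, h]
  have hSdiag : S = V * Matrix.diagonal (fun j => lam j + β) * Vᵀ := by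
    rw [hSdef, hdiagβ, Matrix.mul_add, Matrix.add_mul, hdiag, Matrix.mul_smul,
      Matrix.mul_one, Matrix.smul_mul, hV2]
  set Kb : Matrix (Fin d) (Fin d) ℝ :=
    V * Matrix.diagonal (fun j => (lam j + β)⁻¹) * Vᵀ with hKbdef
  have hdinv : Matrix.diagonal (fun j : Fin d => lam j + β) *
      Matrix.diagonal (fun j => (lam j + β)⁻¹) = 1 := by
    rw [Matrix.diagonal_mul_diagonal]
    ext i j
    by_cases h : i = j <;>
      simp [Matrix.diagonal_apply, Matrix.one_apply, h,
        mul_inv_cancel₀ (ne_of_gt (hlb j))]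
  have hSKb : S * Kb = 1 := by
    rw [hSdiag, hKbdef]
    calc V * Matrix.diagonal (fun j => lam j + β) * Vᵀ *
          (V * Matrix.diagonal (fun j => (lam j + β)⁻¹) * Vᵀ)
        = V * (Matrix.diagonal (fun j => lam j + β) * (Vᵀ * V) *
            Matrix.diagonal (fun j => (lam j + β)⁻¹)) * Vᵀ := by noncomm_ring
      _ = 1 := by rw [hV, Matrix.mul_one, hdinv, Matrix.mul_one, hV2]
  have hKbinv : S⁻¹ = Kb := Matrix.inv_eq_right_inv hSKb
  -- H and the recursion for K
  set H : Matrix (Fin d) (Fin d) ℝ := 1 - α • S with hHdef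
  have hHdiag : H = V * Matrix.diagonal (fun j => 1 - α * (lam j + β)) * Vᵀ := by
    have h1 : Matrix.diagonal (fun j : Fin d => 1 - α * (lam j + β))
        = 1 - α • Matrix.diagonal (fun j => lam j + β) := by
      ext i j
      by_cases h : i = j <;>
        simp [Matrix.diagonal_apply, Matrix.one_apply, h]
    rw [hHdef, h1, Matrix.mul_sub, Matrix.sub_mul, Matrix.mul_one,
      Matrix.mul_smul, Matrix.smul_mul, hV2, ← hSdiag]
  have hKrec : ∀ t, K (t + 1) - Kb = H * (K t - Kb) := by
    intro t
    rw [hK t, hHdef, Matrix.sub_mul, Matrix.one_mul, Matrix.smul_mul,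
      Matrix.mul_sub, hSKb]
    module
  have hKt : ∀ t, K t = Kb + H ^ t * (K 0 - Kb) := by
    intro t
    induction t with
    | zero => simp
    | succ t ih =>
        have h0 := hKrec t
        rw [ih] at h0
        have h3 : H * (Kb + H ^ t * (K 0 - Kb) - Kb) = H ^ (t+1) * (K 0 - Kb) := by
          rw [pow_succ', Matrix.mul_assoc]
          congr 1
          abel
        rw [h3] at h0
        rw [← h0]
        abel
  -- gradient recursion
  have hgrec : ∀ t, g (t + 1) = g t - δ • ((Aᵀ * A) * K (t+1)).mulVec (g t) := by
    intro t
    have hAx : A.mulVec (x (t+1)) - B = (A.mulVec (x t) - B)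
        - δ • (A.mulVec ((K (t+1)).mulVec (g t))) := by
      rw [hx t, Matrix.mulVec_sub, Matrix.mulVec_smul]
      module
    rw [hg (t+1), hAx, Matrix.mulVec_sub, Matrix.mulVec_smul, ← hg t,
      Matrix.mulVec_mulVec, Matrix.mulVec_mulVec]
  -- coordinates
  set c : ℕ → Fin d → ℝ := fun t => Vᵀ.mulVec (g t) with hcdef
  have hgc : ∀ t, g t = V.mulVec (c t) := by
    intro t
    rw [hcdef]
    simp only [Matrix.mulVec_mulVec, hV2, Matrix.one_mulVec]
  have henc : ∀ t, euclNorm (g t) = euclNorm (c t) := fun t => (enorm_orth V hV2 (g t)).symm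
  -- vanishing coordinates
  have hPdiag : Vᵀ * (Aᵀ * A) * V = Matrix.diagonal lam := by
    rw [hdiag]
    calc Vᵀ * (V * Matrix.diagonal lam * Vᵀ) * V
        = (Vᵀ * V) * Matrix.diagonal lam * (Vᵀ * V) := by noncomm_ring
      _ = Matrix.diagonal lam := by rw [hV]; noncomm_ring
  have hAV : ∀ j : Fin d, lam j = 0 → ∀ i, (A * V) i j = 0 := by
    intro j hj i
    have hsum : ∑ i, (A * V) i j ^ 2 = 0 := by
      have : ((A * V)ᵀ * (A * V)) j j = lam j := by
        rw [Matrix.transpose_mul, show Vᵀ * Aᵀ * (A * V) = Vᵀ * (Aᵀ * A) * V by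
          simp only [Matrix.mul_assoc], hPdiag, Matrix.diagonal_apply_eq]
      rw [← hj, ← this, Matrix.mul_apply]
      apply Finset.sum_congr rfl
      intro i _
      rw [Matrix.transpose_apply, sq]
    have := (Finset.sum_eq_zero_iff_of_nonneg (fun i _ => sq_nonneg _)).mp hsum
      i (Finset.mem_univ i)
    exact pow_eq_zero_iff (two_ne_zero) |>.mp this
  have hcz : ∀ t, ∀ j : Fin d, r ≤ (j:ℕ) → c t j = 0 := by
    intro t j hj
    have : c t = ((A * V)ᵀ).mulVec (A.mulVec (x t) - B) := by
      show Vᵀ *ᵥ g t = _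
      rw [hg t, Matrix.mulVec_mulVec, Matrix.transpose_mul]
    rw [this, Matrix.mulVec, dotProduct]
    apply Finset.sum_eq_zero
    intro i _
    rw [Matrix.transpose_apply, hAV j (hzero j hj) i, zero_mul]
  -- conjugated powers of H
  set F : Matrix (Fin d) (Fin d) ℝ := Vᵀ * (K 0 - Kb) * V with hFdef
  have hHpow : ∀ k : ℕ, H ^ k
      = V * Matrix.diagonal (fun j => (1 - α * (lam j + β)) ^ k) * Vᵀ := by
    intro k
    rw [hHdiag, ipg_conj_pow V _ hV hV2, Matrix.diagonal_pow]
    rfl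
  -- the key identity in eigen-coordinates
  have hkey : ∀ t : ℕ, Vᵀ * ((Aᵀ * A) * K (t+1)) * V
      = Matrix.diagonal (fun j => lam j * (lam j + β)⁻¹)
        + Matrix.diagonal lam *
            Matrix.diagonal (fun j => (1 - α * (lam j + β)) ^ (t+1)) * F := by
    intro t
    have e1 : Vᵀ * ((Aᵀ * A) * Kb) * V
        = Matrix.diagonal (fun j => lam j * (lam j + β)⁻¹) := by
      rw [hdiag, hKbdef]
      calc Vᵀ * (V * Matrix.diagonal lam * Vᵀ *
            (V * Matrix.diagonal (fun j => (lam j + β)⁻¹) * Vᵀ)) * V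
          = (Vᵀ * V) * (Matrix.diagonal lam * ((Vᵀ * V) *
              (Matrix.diagonal (fun j => (lam j + β)⁻¹) * (Vᵀ * V)))) := by
            simp only [Matrix.mul_assoc]
        _ = Matrix.diagonal (fun j => lam j * (lam j + β)⁻¹) := by
            rw [hV]
            simp [Matrix.diagonal_mul_diagonal]
    have e2 : Vᵀ * ((Aᵀ * A) * (H ^ (t+1) * (K 0 - Kb))) * V
        = Matrix.diagonal lam *
            Matrix.diagonal (fun j => (1 - α * (lam j + β)) ^ (t+1)) * F := by
      rw [hHpow (t+1), hFdef, hdiag]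
      calc Vᵀ * (V * Matrix.diagonal lam * Vᵀ *
            (V * Matrix.diagonal (fun j => (1 - α * (lam j + β)) ^ (t+1)) * Vᵀ *
              (K 0 - Kb))) * V
          = (Vᵀ * V) * (Matrix.diagonal lam * ((Vᵀ * V) *
              (Matrix.diagonal (fun j => (1 - α * (lam j + β)) ^ (t+1)) *
                (Vᵀ * ((K 0 - Kb) * V))))) := by
            simp only [Matrix.mul_assoc]
        _ = Matrix.diagonal lam *
              Matrix.diagonal (fun j => (1 - α * (lam j + β)) ^ (t+1)) *
              (Vᵀ * (K 0 - Kb) * V) := by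
            rw [hV]
            simp only [Matrix.one_mul, Matrix.mul_assoc]
    calc Vᵀ * ((Aᵀ * A) * K (t+1)) * V
        = Vᵀ * ((Aᵀ * A) * Kb) * V
          + Vᵀ * ((Aᵀ * A) * (H ^ (t+1) * (K 0 - Kb))) * V := by
          rw [hKt (t+1), Matrix.mul_add, Matrix.mul_add, Matrix.add_mul]
      _ = _ := by rw [e1, e2]
  -- coordinate recursion
  have hcrec : ∀ t : ℕ, c (t+1)
      = (Matrix.diagonal (fun j => 1 - δ * (lam j * (lam j + β)⁻¹))).mulVec (c t)
        + (-δ) • ((Matrix.diagonal lam *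
            Matrix.diagonal (fun j => (1 - α * (lam j + β)) ^ (t+1)) * F).mulVec (c t)) := by
    intro t
    have h1 : c (t+1) = c t - δ • ((Vᵀ * ((Aᵀ * A) * K (t+1)) * V).mulVec (c t)) := by
      show Vᵀ *ᵥ g (t+1) = _
      simp only [hgrec t, hgc t, Matrix.mulVec_sub, Matrix.mulVec_smul,
        Matrix.mulVec_mulVec]
      rw [hV, Matrix.one_mulVec]
      simp only [Matrix.mul_assoc]
    rw [h1, hkey t, Matrix.add_mulVec]
    funext j
    simp only [Pi.add_apply, Pi.sub_apply, Pi.smul_apply, Matrix.mulVec_diagonal,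
      smul_eq_mul]
    ring
  clear_value c F
  -- scalar quantities
  set s1 : ℝ := lam i0 * (lam i0 + β)⁻¹ with hs1
  set sr : ℝ := lam ir * (lam ir + β)⁻¹ with hsr
  have hs1pos : 0 < s1 := mul_pos hl1 (inv_pos.mpr (hlb i0))
  have hsrpos : 0 < sr := mul_pos hlr (inv_pos.mpr (hlb ir))
  have hδval : δ = 2 / (s1 + sr) := by
    rw [hδ, hs1, hsr]
    simp [div_eq_mul_inv]
  have hδpos : 0 < δ := by rw [hδval]; positivity
  have hsle : sr ≤ s1 := by
    rw [hs1, hsr, ← div_eq_mul_inv, ← div_eq_mul_inv,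
      div_le_div_iff₀ (hlb ir) (hlb i0)]
    have := lam_le ir
    nlinarith
  set μ : ℝ := (s1 - sr) / (s1 + sr) with hμdef
  have hμ0 : 0 ≤ μ := div_nonneg (by linarith) (by linarith)
  have hμeq : μ = (lam i0 - lam ir) /
      (lam i0 + lam ir + 2 * (lam i0 * lam ir / β)) := by
    have h1 : (lam i0 + β) ≠ 0 := ne_of_gt (hlb i0)
    have h2 : (lam ir + β) ≠ 0 := ne_of_gt (hlb ir)
    have h3 : (β:ℝ) ≠ 0 := ne_of_gt hβ
    have h4 : s1 + sr ≠ 0 := ne_of_gt (by linarith)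
    have h5 : lam i0 + lam ir + 2 * (lam i0 * lam ir / β) ≠ 0 :=
      ne_of_gt (by have := div_pos (mul_pos hl1 hlr) hβ; linarith)
    rw [hμdef, div_eq_div_iff h4 h5, hs1, hsr]
    field_simp
    ring
  -- the contraction factor ρ
  have hne : Nonempty (Fin d) := ⟨i0⟩
  set ρv : ℝ := max ((lam i0 - lam id') / (lam i0 + lam id' + 2 * β))
      (Finset.univ.sup' Finset.univ_nonempty
        (fun j : Fin d => |1 - α * (lam j + β)|)) with hρvdef
  have hϱ0 : 0 ≤ (lam i0 - lam id') / (lam i0 + lam id' + 2 * β) := by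
    have h1 := lam_le id'
    have h2 := lamnn id'
    apply div_nonneg <;> linarith
  have hρv0 : 0 ≤ ρv := le_trans hϱ0 (le_max_left _ _)
  have hρj : ∀ j : Fin d, |1 - α * (lam j + β)| ≤ ρv := fun j =>
    le_trans (Finset.le_sup' (fun j : Fin d => |1 - α * (lam j + β)|) (Finset.mem_univ j)) (le_max_right _ _)
  refine ⟨ρv, le_max_left _ _, ?_, ?_⟩
  · -- ρv < 1
    apply max_lt
    · rw [div_lt_one (by have := lamnn id'; linarith)]
      have := lamnn id'
      linarith
    · rw [Finset.sup'_lt_iff]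
      intro j _
      rw [abs_lt]
      have hj1 : α * (lam j + β) ≤ α * (lam i0 + β) :=
        mul_le_mul_of_nonneg_left (by have := lam_le j; linarith) (le_of_lt hα0)
      have hj2 : α * (lam i0 + β) < 2 := by
        have hpos : (0:ℝ) < lam i0 + β := hlb i0
        calc α * (lam i0 + β) < (2 / (lam i0 + β)) * (lam i0 + β) :=
              mul_lt_mul_of_pos_right hα hpos
          _ = 2 := by field_simp
      have hj3 : 0 < α * (lam j + β) := mul_pos hα0 (hlb j)
      constructor <;> linarith
  · intro t
    rw [henc (t+1), henc t, hcrec t]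
    -- term 1 bound
    have hT1 : euclNorm ((Matrix.diagonal
          (fun j => 1 - δ * (lam j * (lam j + β)⁻¹))).mulVec (c t))
        ≤ μ * euclNorm (c t) := by
      refine enorm_diag_le _ _ _ hμ0 ?_
      intro j
      rcases lt_or_ge (j : ℕ) r with hjr | hjr
      · have hjle : j ≤ ir := by
          rw [Fin.le_def, show (ir : ℕ) = r - 1 from rfl]
          omega
        have hlamj_ge : lam ir ≤ lam j := hanti hjle
        have hlamj_le : lam j ≤ lam i0 := lam_le j
        have hsge : sr ≤ lam j * (lam j + β)⁻¹ := by
          rw [hsr, ← div_eq_mul_inv, ← div_eq_mul_inv,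
            div_le_div_iff₀ (hlb ir) (hlb j)]
          nlinarith
        have hsle2 : lam j * (lam j + β)⁻¹ ≤ s1 := by
          rw [hs1, ← div_eq_mul_inv, ← div_eq_mul_inv,
            div_le_div_iff₀ (hlb j) (hlb i0)]
          nlinarith
        have hssum : s1 + sr ≠ 0 := ne_of_gt (by linarith)
        have e1 : 1 - δ * sr = μ := by
          rw [hδval, hμdef]
          field_simp
          ring
        have e2 : 1 - δ * s1 = -μ := by
          rw [hδval, hμdef]
          field_simp
          ring
        have hub : 1 - δ * (lam j * (lam j + β)⁻¹) ≤ μ := by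
          have := mul_le_mul_of_nonneg_left hsge (le_of_lt hδpos)
          linarith
        have hlbd : -μ ≤ 1 - δ * (lam j * (lam j + β)⁻¹) := by
          have := mul_le_mul_of_nonneg_left hsle2 (le_of_lt hδpos)
          linarith
        have habs : (1 - δ * (lam j * (lam j + β)⁻¹))^2 ≤ μ^2 := by nlinarith
        calc ((1 - δ * (lam j * (lam j + β)⁻¹)) * c t j)^2
            = (1 - δ * (lam j * (lam j + β)⁻¹))^2 * (c t j)^2 := by ring
          _ ≤ μ^2 * (c t j)^2 := mul_le_mul_of_nonneg_right habs (sq_nonneg _)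
      · rw [hcz t j hjr]
        simp
    -- term 2 bound
    have hT2 : euclNorm ((-δ) • ((Matrix.diagonal lam *
          Matrix.diagonal (fun j => (1 - α * (lam j + β)) ^ (t+1)) * F).mulVec (c t)))
        ≤ δ * (lam i0 * (ρv ^ (t+1) * (frob F * euclNorm (c t)))) := by
      rw [enorm_smul', abs_neg, abs_of_pos hδpos]
      refine mul_le_mul_of_nonneg_left ?_ (le_of_lt hδpos)
      have assoc : (Matrix.diagonal lam *
            Matrix.diagonal (fun j => (1 - α * (lam j + β)) ^ (t+1)) * F).mulVec (c t)
          = (Matrix.diagonal lam).mulVec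
              ((Matrix.diagonal (fun j => (1 - α * (lam j + β)) ^ (t+1))).mulVec
                (F.mulVec (c t))) := by
        rw [Matrix.mulVec_mulVec, Matrix.mulVec_mulVec]
      rw [assoc]
      have b1 : euclNorm ((Matrix.diagonal
            (fun j => (1 - α * (lam j + β)) ^ (t+1))).mulVec (F.mulVec (c t)))
          ≤ ρv ^ (t+1) * euclNorm (F.mulVec (c t)) := by
        refine enorm_diag_le _ _ _ (pow_nonneg hρv0 _) ?_
        intro j
        have h1 : |(1 - α * (lam j + β)) ^ (t+1)| ≤ ρv ^ (t+1) := by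
          rw [abs_pow]
          exact pow_le_pow_left₀ (abs_nonneg _) (hρj j) _
        have h2 : ((1 - α * (lam j + β)) ^ (t+1))^2 ≤ (ρv ^ (t+1))^2 := by
          nlinarith [sq_abs ((1 - α * (lam j + β)) ^ (t+1)),
            abs_nonneg ((1 - α * (lam j + β)) ^ (t+1))]
        calc ((1 - α * (lam j + β)) ^ (t+1) * F.mulVec (c t) j)^2
            = ((1 - α * (lam j + β)) ^ (t+1))^2 * (F.mulVec (c t) j)^2 := by ring
          _ ≤ (ρv ^ (t+1))^2 * (F.mulVec (c t) j)^2 :=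
              mul_le_mul_of_nonneg_right h2 (sq_nonneg _)
      have b2 : euclNorm (F.mulVec (c t)) ≤ frob F * euclNorm (c t) := enorm_mulVec_le F _
      have b0 : euclNorm ((Matrix.diagonal lam).mulVec
            ((Matrix.diagonal (fun j => (1 - α * (lam j + β)) ^ (t+1))).mulVec
              (F.mulVec (c t))))
          ≤ lam i0 * euclNorm ((Matrix.diagonal
              (fun j => (1 - α * (lam j + β)) ^ (t+1))).mulVec (F.mulVec (c t))) := by
        refine enorm_diag_le _ _ _ (le_of_lt hl1) ?_
        intro j
        have hsq : (lam j)^2 ≤ (lam i0)^2 := by nlinarith [lamnn j, lam_le j]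
        calc (lam j * ((Matrix.diagonal
              (fun j => (1 - α * (lam j + β)) ^ (t+1))).mulVec (F.mulVec (c t)) j))^2
            = (lam j)^2 * ((Matrix.diagonal
              (fun j => (1 - α * (lam j + β)) ^ (t+1))).mulVec (F.mulVec (c t)) j)^2 := by
              ring
          _ ≤ (lam i0)^2 * ((Matrix.diagonal
              (fun j => (1 - α * (lam j + β)) ^ (t+1))).mulVec (F.mulVec (c t)) j)^2 :=
              mul_le_mul_of_nonneg_right hsq (sq_nonneg _)
      refine le_trans b0 ?_
      refine mul_le_mul_of_nonneg_left ?_ (le_of_lt hl1)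
      refine le_trans b1 ?_
      exact mul_le_mul_of_nonneg_left b2 (pow_nonneg hρv0 _)
    have hfrob : frob F = frob (K 0 - S⁻¹) := by
      rw [hKbinv, hFdef]
      exact frob_conj V _ hV hV2
    refine le_trans (enorm_triangle _ _) ?_
    refine le_trans (add_le_add hT1 hT2) ?_
    apply le_of_eq
    rw [hμeq, hfrob]
    ring
end

section
/- Under the noisy IPG model, suppose additionally that ρ < ρ_j for every j ∈ {1, …, d} and that w < w_bd. Then there exists a finite non-negative integer T′ such that R(T′+1) < 1 and limsup_{t→∞} ‖z(t)‖ ≤ w/(1 − R(T′+1)). -/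
open Matrix Finset Filter

/-- Euclidean norm of a vector in `ℝ^d`. -/
noncomputable def enorm_euc {d : ℕ} (v : Fin d → ℝ) : ℝ :=
  Real.sqrt (∑ i, v i ^ 2)

/-- The `j`-th column of a matrix. -/
def mcol {n d : ℕ} (M : Matrix (Fin n) (Fin d) ℝ) (j : Fin d) : Fin n → ℝ :=
  fun i => M i j

lemma enorm_euc_eq_norm {d : ℕ} (v : Fin d → ℝ) :
    enorm_euc v = ‖(WithLp.equiv 2 (Fin d → ℝ)).symm v‖ := by
  rw [EuclideanSpace.norm_eq]
  simp [enorm_euc, Real.norm_eq_abs, sq_abs]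

lemma enorm_euc_nonneg {d : ℕ} (v : Fin d → ℝ) : 0 ≤ enorm_euc v := Real.sqrt_nonneg _

lemma enorm_euc_add_le {d : ℕ} (a b : Fin d → ℝ) : enorm_euc (a + b) ≤ enorm_euc a + enorm_euc b := by
  simp only [enorm_euc_eq_norm]
  exact norm_add_le _ _

lemma enorm_euc_sq {d : ℕ} (v : Fin d → ℝ) : enorm_euc v ^ 2 = ∑ i, v i ^ 2 :=
  Real.sq_sqrt (Finset.sum_nonneg fun _ _ => sq_nonneg _)

lemma enorm_euc_smul {d : ℕ} (c : ℝ) (v : Fin d → ℝ) : enorm_euc (c • v) = |c| * enorm_euc v := by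
  have h1 : ∑ i, ((c • v) i) ^ 2 = c ^ 2 * ∑ i, v i ^ 2 := by
    rw [Finset.mul_sum]
    exact Finset.sum_congr rfl fun i _ => by simp [mul_pow]
  rw [enorm_euc, h1, Real.sqrt_mul (sq_nonneg c), Real.sqrt_sq_eq_abs, enorm_euc]

lemma enorm_euc_def_dot {d : ℕ} (v : Fin d → ℝ) : enorm_euc v = Real.sqrt (v ⬝ᵥ v) := by
  simp [enorm_euc, dotProduct, sq]

lemma enorm_euc_neg {d : ℕ} (v : Fin d → ℝ) : enorm_euc (-v) = enorm_euc v := by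
  simp [enorm_euc, neg_sq]

lemma mcol_mul {n d : ℕ} (P : Matrix (Fin n) (Fin n) ℝ) (Q : Matrix (Fin n) (Fin d) ℝ)
    (j : Fin d) : mcol (P * Q) j = P.mulVec (mcol Q j) := by
  funext i
  simp [mcol, Matrix.mul_apply, Matrix.mulVec, dotProduct]

lemma mcol_sub {n d : ℕ} (P Q : Matrix (Fin n) (Fin d) ℝ) (j : Fin d) :
    mcol (P - Q) j = mcol P j - mcol Q j := rfl

lemma mulVec_eq_sum_col {d : ℕ} (N : Matrix (Fin d) (Fin d) ℝ) (u : Fin d → ℝ) :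
    N.mulVec u = ∑ j, u j • mcol N j := by
  funext i
  simp [Matrix.mulVec, dotProduct, mcol, mul_comm]

lemma enorm_euc_sum_le {d : ℕ} {ι : Type*} (s : Finset ι) (f : ι → Fin d → ℝ) :
    enorm_euc (∑ j ∈ s, f j) ≤ ∑ j ∈ s, enorm_euc (f j) := by
  simp only [enorm_euc_eq_norm]
  rw [show (WithLp.equiv 2 (Fin d → ℝ)).symm (∑ j ∈ s, f j)
      = ∑ j ∈ s, (WithLp.equiv 2 (Fin d → ℝ)).symm (f j) from
        map_sum (WithLp.linearEquiv 2 ℝ (Fin d → ℝ)).symm f s]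
  exact norm_sum_le _ _

/-- Frobenius-type bound for the operator norm. -/
lemma enorm_euc_mulVec_le {d : ℕ} (N : Matrix (Fin d) (Fin d) ℝ) (u : Fin d → ℝ) :
    enorm_euc (N.mulVec u) ≤ Real.sqrt (∑ j, enorm_euc (mcol N j) ^ 2) * enorm_euc u := by
  rw [mulVec_eq_sum_col]
  have h0 : enorm_euc (∑ j, u j • mcol N j) ≤ ∑ j, |u j| * enorm_euc (mcol N j) := by
    refine (enorm_euc_sum_le _ _).trans (le_of_eq ?_)
    exact Finset.sum_congr rfl fun j _ => enorm_euc_smul _ _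
  refine h0.trans ?_
  have h1 : (0:ℝ) ≤ ∑ j, |u j| * enorm_euc (mcol N j) :=
    Finset.sum_nonneg fun j _ => mul_nonneg (abs_nonneg _) (enorm_euc_nonneg _)
  have h2 : (∑ j, |u j| * enorm_euc (mcol N j)) ^ 2
      ≤ (∑ j, |u j| ^ 2) * ∑ j, enorm_euc (mcol N j) ^ 2 :=
    Finset.sum_mul_sq_le_sq_mul_sq _ _ _
  have h3 : ∑ j, |u j| ^ 2 = ∑ j, u j ^ 2 := by simp [sq_abs]
  calc ∑ j, |u j| * enorm_euc (mcol N j)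
      = Real.sqrt ((∑ j, |u j| * enorm_euc (mcol N j)) ^ 2) := (Real.sqrt_sq h1).symm
    _ ≤ Real.sqrt ((∑ j, u j ^ 2) * ∑ j, enorm_euc (mcol N j) ^ 2) := by
        apply Real.sqrt_le_sqrt; rw [← h3]; exact h2
    _ = Real.sqrt (∑ j, enorm_euc (mcol N j) ^ 2) * enorm_euc u := by
        rw [Real.sqrt_mul (Finset.sum_nonneg fun _ _ => sq_nonneg _), mul_comm]
        rfl

lemma enorm_euc_orth {d : ℕ} {Wm : Matrix (Fin d) (Fin d) ℝ} (h : Wmᵀ * Wm = 1)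
    (x : Fin d → ℝ) : enorm_euc (Wm.mulVec x) = enorm_euc x := by
  rw [enorm_euc_def_dot, enorm_euc_def_dot]
  congr 1
  rw [Matrix.dotProduct_mulVec, ← Matrix.mulVec_transpose, Matrix.mulVec_mulVec, h,
    Matrix.one_mulVec]

lemma spectral_bound {d : ℕ} {lam : Fin d → ℝ} {V : Matrix (Fin d) (Fin d) ℝ}
    (hV : Vᵀ * V = 1) (hVVt : V * Vᵀ = 1) {L : ℝ} (hL : 0 ≤ L)
    (habs : ∀ j, |lam j| ≤ L) (v : Fin d → ℝ) :
    enorm_euc ((V * Matrix.diagonal lam * Vᵀ).mulVec v) ≤ L * enorm_euc v := by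
  have hWt : (Vᵀ)ᵀ * Vᵀ = 1 := by rw [Matrix.transpose_transpose]; exact hVVt
  set u := Vᵀ.mulVec v with hu
  have h1 : (V * Matrix.diagonal lam * Vᵀ).mulVec v
      = V.mulVec ((Matrix.diagonal lam).mulVec u) := by
    rw [hu, Matrix.mulVec_mulVec, Matrix.mulVec_mulVec]
  rw [h1, enorm_euc_orth hV]
  have hu_eq : enorm_euc u = enorm_euc v := enorm_euc_orth hWt v
  have h2 : enorm_euc ((Matrix.diagonal lam).mulVec u) ^ 2 ≤ (L * enorm_euc u) ^ 2 := by
    rw [enorm_euc_sq, mul_pow, enorm_euc_sq, Finset.mul_sum]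
    refine Finset.sum_le_sum fun j _ => ?_
    have hj : (Matrix.diagonal lam).mulVec u j = lam j * u j := Matrix.mulVec_diagonal _ _ _
    rw [hj, mul_pow]
    have hab := abs_le.mp (habs j)
    have : lam j ^ 2 ≤ L ^ 2 := by nlinarith [hab.1, hab.2]
    exact mul_le_mul_of_nonneg_right this (sq_nonneg _)
  have h3 : 0 ≤ L * enorm_euc u := mul_nonneg hL (enorm_euc_nonneg _)
  rw [hu_eq] at h2 h3
  nlinarith [enorm_euc_nonneg ((Matrix.diagonal lam).mulVec u)]

lemma enorm_euc_single {d : ℕ} (j : Fin d) : enorm_euc (Pi.single j 1 : Fin d → ℝ) = 1 := by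
  have : ∑ i, ((Pi.single j 1 : Fin d → ℝ) i) ^ 2 = 1 := by
    rw [Finset.sum_eq_single j]
    · simp
    · intro b _ hb; simp [Pi.single_apply, hb]
    · simp
  rw [enorm_euc, this, Real.sqrt_one]

lemma lam_pos {d : ℕ} {lam : Fin d → ℝ} {V : Matrix (Fin d) (Fin d) ℝ}
    (hV : Vᵀ * V = 1) {α ρ : ℝ} (hα0 : 0 < α) (hρ1 : ρ < 1)
    (hc : ∀ v : Fin d → ℝ,
      enorm_euc (((1 : Matrix (Fin d) (Fin d) ℝ) - α • (V * Matrix.diagonal lam * Vᵀ)).mulVec v)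
        ≤ ρ * enorm_euc v)
    (j : Fin d) : 0 < lam j := by
  set x := V.mulVec (Pi.single j 1 : Fin d → ℝ) with hx
  have hex : enorm_euc x = 1 := by rw [hx, enorm_euc_orth hV, enorm_euc_single]
  have hDe : (Matrix.diagonal lam).mulVec (Pi.single j 1 : Fin d → ℝ)
      = lam j • (Pi.single j 1 : Fin d → ℝ) := by
    funext i
    rw [Matrix.mulVec_diagonal]
    by_cases h : i = j
    · subst h; simp
    · simp [Pi.single_apply, h]
  have hMV : (V * Matrix.diagonal lam * Vᵀ) * V = V * Matrix.diagonal lam := by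
    rw [Matrix.mul_assoc, hV, Matrix.mul_one]
  have hMx : (V * Matrix.diagonal lam * Vᵀ).mulVec x = lam j • x := by
    rw [hx, Matrix.mulVec_mulVec, hMV, ← Matrix.mulVec_mulVec, hDe, Matrix.mulVec_smul]
  have hkey : ((1 : Matrix (Fin d) (Fin d) ℝ) - α • (V * Matrix.diagonal lam * Vᵀ)).mulVec x
      = (1 - α * lam j) • x := by
    rw [Matrix.sub_mulVec, Matrix.one_mulVec, Matrix.smul_mulVec, hMx, smul_smul]
    funext i
    simp only [Pi.sub_apply, Pi.smul_apply, smul_eq_mul]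
    ring
  have hb := hc x
  rw [hkey, enorm_euc_smul, hex, mul_one, mul_one] at hb
  have h2 := abs_lt.mp (lt_of_le_of_lt hb hρ1)
  nlinarith [h2.2, hα0]
/-- Theorem 4 of the paper: under the noisy IPG model, if `ρ < ρ_j`
for every `j` and `w < w_bd`, then there is a finite `T'` with `R(T'+1) < 1` and
`limsup_{t→∞} ‖z(t)‖ ≤ w/(1 − R(T'+1))`. -/
theorem noisy_ipg_asymptotic_error_bound
    (n d : ℕ) (hd : 0 < d)
    (A : Matrix (Fin n) (Fin d) ℝ) (B : Fin n → ℝ)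
    (hPD : (Aᵀ * A).PosDef)
    (xstar : Fin d → ℝ) (hxstar : (Aᵀ * A).mulVec xstar = Aᵀ.mulVec B)
    (lam : Fin d → ℝ) (V : Matrix (Fin d) (Fin d) ℝ)
    (hV : Vᵀ * V = 1)
    (hdiag : Aᵀ * A = V * Matrix.diagonal lam * Vᵀ)
    (hanti : Antitone lam)
    (α w ρ : ℝ) (hα0 : 0 < α) (hα : α < 2 / lam ⟨0, hd⟩)
    (hw : 0 < w) (hρ0 : 0 < ρ) (hρ1 : ρ < 1)
    (hcontract : ∀ v : Fin d → ℝ,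
      enorm_euc (((1 : Matrix (Fin d) (Fin d) ℝ) - α • (Aᵀ * A)).mulVec v) ≤ ρ * enorm_euc v)
    (K K0 W : ℕ → Matrix (Fin d) (Fin d) ℝ)
    (hK0 : ∀ t, K0 (t + 1) = K t - α • ((Aᵀ * A) * K t - 1))
    (hKnoise : ∀ t, K t = K0 t + W t)
    (hW : ∀ (t : ℕ) (j : Fin d), enorm_euc (mcol (W t) j) ≤ w)
    (z z0 wx : ℕ → Fin d → ℝ)
    (hz0 : ∀ t, z0 (t + 1) =
      ((1 : Matrix (Fin d) (Fin d) ℝ) - K (t + 1) * (Aᵀ * A)).mulVec (z t))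
    (hznoise : ∀ t, z t = z0 t + wx t)
    (hwx : ∀ t, enorm_euc (wx t) ≤ w)
    (S R : ℕ → ℝ)
    (hS : ∀ t, S t = Real.sqrt (∑ j : Fin d,
      (ρ ^ t * enorm_euc (mcol (K0 0) j - mcol (Aᵀ * A)⁻¹ j) +
        (∑ i ∈ Finset.range (t + 1), ρ ^ i) * w) ^ 2))
    (hR : ∀ t, R t = lam ⟨0, hd⟩ * S t)
    (hρj : ∀ j : Fin d,
      ρ < enorm_euc (mcol (K0 0) j - mcol (Aᵀ * A)⁻¹ j) /
            (enorm_euc (mcol (K0 0) j - mcol (Aᵀ * A)⁻¹ j) + w))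
    (hwbd : w < (1 - ρ) / (lam ⟨0, hd⟩ * Real.sqrt d)) :
    ∃ T' : ℕ, R (T' + 1) < 1 ∧
      Filter.limsup (fun t => enorm_euc (z t)) Filter.atTop ≤ w / (1 - R (T' + 1)) := by
  set M : Matrix (Fin d) (Fin d) ℝ := Aᵀ * A with hM
  set L : ℝ := lam ⟨0, hd⟩ with hL
  have hVVt : V * Vᵀ = 1 := mul_eq_one_comm.mp hV
  have hc' : ∀ v : Fin d → ℝ,
      enorm_euc (((1 : Matrix (Fin d) (Fin d) ℝ) - α • (V * Matrix.diagonal lam * Vᵀ)).mulVec v)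
        ≤ ρ * enorm_euc v := by
    intro v; rw [← hdiag]; exact hcontract v
  have hlampos : ∀ j, 0 < lam j := fun j => lam_pos hV hα0 hρ1 hc' j
  have hL0 : 0 < L := hlampos _
  have habs : ∀ j, |lam j| ≤ L := fun j => by
    rw [abs_of_pos (hlampos j)]
    exact hanti (by simp [Fin.le_def])
  have hMop : ∀ v, enorm_euc (M.mulVec v) ≤ L * enorm_euc v := by
    intro v; rw [hdiag]; exact spectral_bound hV hVVt hL0.le habs v
  have hdet : IsUnit M.det := isUnit_iff_ne_zero.mpr hPD.det_pos.ne'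
  have hMMinv : M * M⁻¹ = 1 := Matrix.mul_nonsing_inv _ hdet
  have hMinvM : M⁻¹ * M = 1 := Matrix.nonsing_inv_mul _ hdet
  -- the column errors
  set e : ℕ → Fin d → ℝ := fun t j => enorm_euc (mcol (K0 t) j - mcol M⁻¹ j) with he
  set b : ℕ → Fin d → ℝ :=
    fun t j => ρ ^ t * e 0 j + (∑ i ∈ Finset.range (t + 1), ρ ^ i) * w with hb
  -- recursion on the K0 error matrix
  have hK0rec : ∀ t, K0 (t + 1) - M⁻¹ = (1 - α • M) * (K t - M⁻¹) := by
    intro t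
    rw [hK0 t, Matrix.sub_mul, Matrix.one_mul, smul_mul_assoc, Matrix.mul_sub, hMMinv,
      smul_sub]
    abel
  have hcol : ∀ t j, mcol (K0 (t + 1)) j - mcol M⁻¹ j
      = (1 - α • M).mulVec (mcol (K t) j - mcol M⁻¹ j) := by
    intro t j
    have h := congrArg (fun P => mcol P j) (hK0rec t)
    simpa only [mcol_sub, mcol_mul] using h
  have hKtcol : ∀ t j, enorm_euc (mcol (K t) j - mcol M⁻¹ j) ≤ e t j + w := by
    intro t j
    have hsplit : mcol (K t) j - mcol M⁻¹ j
        = (mcol (K0 t) j - mcol M⁻¹ j) + mcol (W t) j := by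
      rw [hKnoise t]; funext i; simp [mcol]; ring
    rw [hsplit]
    exact (enorm_euc_add_le _ _).trans (add_le_add le_rfl (hW t j))
  have hstep_e : ∀ t j, e (t + 1) j ≤ ρ * (e t j + w) := by
    intro t j
    have h1 : e (t + 1) j ≤ ρ * enorm_euc (mcol (K t) j - mcol M⁻¹ j) := by
      show enorm_euc _ ≤ _
      rw [hcol t j]
      exact hcontract _
    exact h1.trans (mul_le_mul_of_nonneg_left (hKtcol t j) hρ0.le)
  have hbrec : ∀ t j, b (t + 1) j = ρ * b t j + w := by
    intro t j
    simp only [hb]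
    rw [geom_sum_succ (x := ρ) (n := t + 1)]
    ring
  have hbbd : ∀ t j, e t j + w ≤ b t j := by
    intro t
    induction t with
    | zero =>
      intro j
      simp only [hb, pow_zero, one_mul]
      rw [Finset.sum_range_one]
      norm_num
    | succ t ih =>
      intro j
      have h2 : e (t + 1) j ≤ ρ * b t j :=
        (hstep_e t j).trans (mul_le_mul_of_nonneg_left (ih j) hρ0.le)
      rw [hbrec t j]
      linarith
  have hb_nonneg : ∀ t j, 0 ≤ b t j := by
    intro t j
    have h1 := hbbd t j
    have h2 : (0:ℝ) ≤ e t j := enorm_euc_nonneg _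
    linarith
  have hb_anti : ∀ t j, b (t + 1) j ≤ b t j := by
    intro t j
    have hpos : 0 < e 0 j + w := by
      have h0 : (0:ℝ) ≤ e 0 j := enorm_euc_nonneg _
      linarith
    have hρj' : ρ * (e 0 j + w) ≤ e 0 j := by
      have h := hρj j
      rw [lt_div_iff₀ hpos] at h
      exact h.le
    simp only [hb]
    rw [Finset.sum_range_succ _ (t + 1), pow_succ]
    have hpt : (0:ℝ) ≤ ρ ^ t := pow_nonneg hρ0.le t
    nlinarith [mul_le_mul_of_nonneg_left hρj' hpt]
  have hS_eq : ∀ t, S t = Real.sqrt (∑ j, b t j ^ 2) := fun t => hS t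
  have hS_anti : ∀ t, S (t + 1) ≤ S t := by
    intro t
    rw [hS_eq, hS_eq]
    apply Real.sqrt_le_sqrt
    refine Finset.sum_le_sum fun j _ => ?_
    exact pow_le_pow_left₀ (hb_nonneg _ j) (hb_anti t j) 2
  have hR_anti : Antitone R := by
    apply antitone_nat_of_succ_le
    intro t
    rw [hR, hR]
    exact mul_le_mul_of_nonneg_left (hS_anti t) hL0.le
  have hR_nonneg : ∀ t, 0 ≤ R t := fun t => by
    rw [hR, hS_eq]; exact mul_nonneg hL0.le (Real.sqrt_nonneg _)
  -- one-step bound on z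
  have hop : ∀ s v, enorm_euc (((1 : Matrix (Fin d) (Fin d) ℝ) - K s * M).mulVec v)
      ≤ R s * enorm_euc v := by
    intro s v
    have hfact : (1 : Matrix (Fin d) (Fin d) ℝ) - K s * M = (M⁻¹ - K s) * M := by
      rw [Matrix.sub_mul, hMinvM]
    have h1 : ((1 : Matrix (Fin d) (Fin d) ℝ) - K s * M).mulVec v
        = (M⁻¹ - K s).mulVec (M.mulVec v) := by
      rw [hfact, ← Matrix.mulVec_mulVec]
    rw [h1]
    have hcolbd : ∀ j, enorm_euc (mcol (M⁻¹ - K s) j) ≤ b s j := by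
      intro j
      have : mcol (M⁻¹ - K s) j = -(mcol (K s) j - mcol M⁻¹ j) := by
        funext i; simp [mcol]
      rw [this, enorm_euc_neg]
      exact (hKtcol s j).trans (hbbd s j)
    calc enorm_euc ((M⁻¹ - K s).mulVec (M.mulVec v))
        ≤ Real.sqrt (∑ j, enorm_euc (mcol (M⁻¹ - K s) j) ^ 2) * enorm_euc (M.mulVec v) :=
          enorm_euc_mulVec_le _ _
      _ ≤ Real.sqrt (∑ j, b s j ^ 2) * (L * enorm_euc v) := by
          refine mul_le_mul ?_ (hMop v) (enorm_euc_nonneg _) (Real.sqrt_nonneg _)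
          apply Real.sqrt_le_sqrt
          refine Finset.sum_le_sum fun j _ => ?_
          exact pow_le_pow_left₀ (enorm_euc_nonneg _) (hcolbd j) 2
      _ = R s * enorm_euc v := by rw [hR, hS_eq]; ring
  have hz_step : ∀ t, enorm_euc (z (t + 1)) ≤ R (t + 1) * enorm_euc (z t) + w := by
    intro t
    rw [hznoise (t + 1)]
    refine (enorm_euc_add_le _ _).trans ?_
    rw [hz0 t]
    exact add_le_add (hop (t + 1) (z t)) (hwx (t + 1))
  -- choice of T'
  have h1ρ : (0:ℝ) < 1 - ρ := by linarith
  have hsd : (0:ℝ) < Real.sqrt d := Real.sqrt_pos.mpr (by exact_mod_cast hd)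
  set c : ℝ := 1 / (L * Real.sqrt d) with hc
  have hc0 : 0 < c := by positivity
  have hwc : w / (1 - ρ) < c := by
    rw [div_lt_iff₀ h1ρ]
    calc w < (1 - ρ) / (L * Real.sqrt d) := hwbd
      _ = c * (1 - ρ) := by rw [hc]; ring
  set E : ℝ := ∑ j, e 0 j with hE
  have hE0 : 0 ≤ E := Finset.sum_nonneg fun j _ => enorm_euc_nonneg _
  have hEj : ∀ j, e 0 j ≤ E := fun j =>
    Finset.single_le_sum (f := fun i => e 0 i) (fun i _ => enorm_euc_nonneg _) (Finset.mem_univ j)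
  have hgeom : ∀ t : ℕ, (∑ i ∈ Finset.range (t + 1), ρ ^ i) ≤ 1 / (1 - ρ) := by
    intro t
    have hne : ρ ≠ 1 := hρ1.ne
    have hne' : ρ - 1 ≠ 0 := by intro h; apply hne; linarith
    have hne'' : (1:ℝ) - ρ ≠ 0 := h1ρ.ne'
    have h2 : (ρ ^ (t + 1) - 1) / (ρ - 1) = (1 - ρ ^ (t + 1)) / (1 - ρ) := by
      rw [div_eq_div_iff hne' hne'']
      ring
    rw [geom_sum_eq hne, h2, div_le_div_iff₀ h1ρ h1ρ]
    have hpw : (0:ℝ) ≤ ρ ^ (t + 1) := pow_nonneg hρ0.le _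
    nlinarith [mul_nonneg hpw h1ρ.le]
  set ε : ℝ := c - w / (1 - ρ) with hε
  have hε0 : 0 < ε := by simp only [hε]; linarith
  have hE1 : (0:ℝ) < E + 1 := by linarith
  obtain ⟨t0, ht0⟩ := exists_pow_lt_of_lt_one (x := ε / (E + 1)) (div_pos hε0 hE1) hρ1
  have hbt0 : ∀ j, b t0 j < c := by
    intro j
    have h1 : ρ ^ t0 * e 0 j ≤ ρ ^ t0 * E :=
      mul_le_mul_of_nonneg_left (hEj j) (pow_nonneg hρ0.le _)
    have h2 : (∑ i ∈ Finset.range (t0 + 1), ρ ^ i) * w ≤ (1 / (1 - ρ)) * w :=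
      mul_le_mul_of_nonneg_right (hgeom t0) hw.le
    have h3 : ρ ^ t0 * E < ε := by
      have h5 : ρ ^ t0 * (E + 1) < ε := by
        have := (lt_div_iff₀ hE1).mp ht0
        linarith
      calc ρ ^ t0 * E ≤ ρ ^ t0 * (E + 1) :=
            mul_le_mul_of_nonneg_left (by linarith) (pow_nonneg hρ0.le _)
        _ < ε := h5
    have h4 : (1 / (1 - ρ)) * w = w / (1 - ρ) := by ring
    simp only [hb]
    calc ρ ^ t0 * e 0 j + (∑ i ∈ Finset.range (t0 + 1), ρ ^ i) * w
        ≤ ρ ^ t0 * E + w / (1 - ρ) := by rw [← h4]; exact add_le_add h1 h2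
      _ < ε + w / (1 - ρ) := add_lt_add_left h3 _
      _ = c := by simp only [hε]; ring
  have hRt0 : R t0 < 1 := by
    have hlt : ∑ j, b t0 j ^ 2 < ∑ _j : Fin d, c ^ 2 := by
      have hne : (Finset.univ : Finset (Fin d)).Nonempty := ⟨⟨0, hd⟩, Finset.mem_univ _⟩
      refine Finset.sum_lt_sum_of_nonempty hne fun j _ => ?_
      exact pow_lt_pow_left₀ (hbt0 j) (hb_nonneg t0 j) (by norm_num)
    have hsum : ∑ _j : Fin d, c ^ 2 = (d : ℝ) * c ^ 2 := by
      rw [Finset.sum_const, Finset.card_univ, Fintype.card_fin, nsmul_eq_mul]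
    have hSlt : S t0 < Real.sqrt d * c := by
      rw [hS_eq]
      calc Real.sqrt (∑ j, b t0 j ^ 2) < Real.sqrt ((d : ℝ) * c ^ 2) := by
            apply Real.sqrt_lt_sqrt (Finset.sum_nonneg fun j _ => sq_nonneg _)
            rw [← hsum]; exact hlt
        _ = Real.sqrt d * c := by
            rw [Real.sqrt_mul (Nat.cast_nonneg d), Real.sqrt_sq hc0.le]
    have : R t0 < L * (Real.sqrt d * c) := by
      rw [hR]
      exact mul_lt_mul_of_pos_left hSlt hL0
    have hcc : L * (Real.sqrt d * c) = 1 := by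
      rw [hc]
      field_simp
    linarith
  refine ⟨t0, ?_, ?_⟩
  · exact lt_of_le_of_lt (hR_anti (Nat.le_succ t0)) hRt0
  · -- limsup bound
    set r : ℝ := R (t0 + 1) with hr
    have hr1 : r < 1 := lt_of_le_of_lt (hR_anti (Nat.le_succ t0)) hRt0
    have hr0 : 0 ≤ r := hR_nonneg _
    have h1r : (0:ℝ) < 1 - r := by linarith
    have hstep' : ∀ t, t0 ≤ t → enorm_euc (z (t + 1)) ≤ r * enorm_euc (z t) + w := by
      intro t ht
      refine (hz_step t).trans (add_le_add_left ?_ w)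
      exact mul_le_mul_of_nonneg_right (hR_anti (by omega)) (enorm_euc_nonneg _)
    have key : ∀ m, enorm_euc (z (t0 + m)) ≤ r ^ m * enorm_euc (z t0) + w / (1 - r) := by
      intro m
      induction m with
      | zero =>
        simp only [Nat.add_zero, pow_zero, one_mul]
        have : 0 ≤ w / (1 - r) := div_nonneg hw.le h1r.le
        linarith
      | succ m ih =>
        have h := hstep' (t0 + m) (Nat.le_add_right _ _)
        have h2 : r * enorm_euc (z (t0 + m)) ≤ r * (r ^ m * enorm_euc (z t0) + w / (1 - r)) :=
          mul_le_mul_of_nonneg_left ih hr0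
        have h3 : r * (r ^ m * enorm_euc (z t0) + w / (1 - r)) + w
            = r ^ (m + 1) * enorm_euc (z t0) + w / (1 - r) := by
          field_simp
          ring
        have heq : t0 + (m + 1) = (t0 + m) + 1 := by omega
        rw [heq]
        linarith
    have hfg : ∀ t, t0 ≤ t →
        enorm_euc (z t) ≤ r ^ (t - t0) * enorm_euc (z t0) + w / (1 - r) := by
      intro t ht
      have := key (t - t0)
      rwa [Nat.add_sub_cancel' ht] at this
    have hpow : Filter.Tendsto (fun t : ℕ => r ^ (t - t0)) Filter.atTop (nhds 0) :=
      (tendsto_pow_atTop_nhds_zero_of_lt_one hr0 hr1).comp (tendsto_sub_atTop_nat t0)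
    have hg : Filter.Tendsto
        (fun t : ℕ => r ^ (t - t0) * enorm_euc (z t0) + w / (1 - r))
        Filter.atTop (nhds (w / (1 - r))) := by
      have := (hpow.mul_const (enorm_euc (z t0))).add_const (w / (1 - r))
      simpa using this
    have hgl : Filter.limsup
        (fun t : ℕ => r ^ (t - t0) * enorm_euc (z t0) + w / (1 - r)) Filter.atTop
        = w / (1 - r) := hg.limsup_eq
    have hev : ∀ᶠ t in Filter.atTop, enorm_euc (z t)
        ≤ r ^ (t - t0) * enorm_euc (z t0) + w / (1 - r) :=
      Filter.eventually_atTop.mpr ⟨t0, hfg⟩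
    have hlb : Filter.IsBoundedUnder (· ≥ ·) Filter.atTop (fun t => enorm_euc (z t)) :=
      Filter.isBoundedUnder_of ⟨0, fun t => enorm_euc_nonneg (z t)⟩
    have hcb : Filter.IsCoboundedUnder (· ≤ ·) Filter.atTop (fun t => enorm_euc (z t)) :=
      hlb.isCoboundedUnder_le
    have hbd : Filter.IsBoundedUnder (· ≤ ·) Filter.atTop
        (fun t : ℕ => r ^ (t - t0) * enorm_euc (z t0) + w / (1 - r)) :=
      hg.isBoundedUnder_le
    have := Filter.limsup_le_limsup hev hcb hbd
    rwa [hgl] at this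
end
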